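/- Let V_{T₀} ∈ ℝ^{d×d} be symmetric positive definite with minimum eigenvalue λ_min(V_{T₀}) ≥ K. For each round t = T₀+1, …, T let S_t be a finite index set with |S_t| ≤ K and let x_{t,i} ∈ ℝ^d for i ∈ S_t satisfy ‖x_{t,i}‖₂ ≤ 1. Define V_t = V_{T₀} + ∑_{t'=T₀+1}^t ∑_{i ∈ S_{t'}} x_{t',i} x_{t',i}ᵀ. Then ∑_{t'=T₀+1}^{T} ∑_{i ∈ S_{t'}} ‖x_{t',i}‖²_{V_{t'-1}⁻¹} ≤ 2 log( det(V_T) / λ_min(V_{T₀})^d ). -/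

import Mathlib

open Matrix Finset

section AuxLemmas

variable {d : ℕ}

private lemma dotnn {M : Matrix (Fin d) (Fin d) ℝ} (hM : M.PosSemidef) (y : Fin d → ℝ) :
    0 ≤ y ⬝ᵥ M *ᵥ y := by
  simpa using hM.re_dotProduct_nonneg y

private lemma vecMulVec_mulVec' (w y : Fin d → ℝ) : vecMulVec w w *ᵥ y = (w ⬝ᵥ y) • w := by
  ext i
  simp only [mulVec, dotProduct, vecMulVec_apply, Pi.smul_apply, smul_eq_mul, Finset.sum_mul]
  exact Finset.sum_congr rfl fun j _ => by ring

private lemma psd_vecMulVec (w : Fin d → ℝ) : (vecMulVec w w).PosSemidef := by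
  refine Matrix.PosSemidef.of_dotProduct_mulVec_nonneg ?_ ?_
  · ext i j; simp [vecMulVec_apply, conjTranspose_apply, mul_comm]
  · intro y
    simp only [star_trivial, vecMulVec_mulVec', dotProduct_smul, smul_eq_mul]
    have : y ⬝ᵥ w = w ⬝ᵥ y := dotProduct_comm _ _
    simpa [this] using mul_self_nonneg (w ⬝ᵥ y)

private lemma diag_const_eq (c : ℝ) :
    diagonal (fun _ : Fin d => c) = c • (1 : Matrix (Fin d) (Fin d) ℝ) := by
  ext i j
  by_cases h : i = j <;> simp [h, Matrix.one_apply, Matrix.diagonal_apply]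

private lemma U_mul_star {A : Matrix (Fin d) (Fin d) ℝ} (hA : A.IsHermitian) :
    (hA.eigenvectorUnitary : Matrix (Fin d) (Fin d) ℝ) *
      (star hA.eigenvectorUnitary : Matrix (Fin d) (Fin d) ℝ) = 1 :=
  Matrix.mem_unitaryGroup_iff.mp hA.eigenvectorUnitary.2

private lemma star_mul_U {A : Matrix (Fin d) (Fin d) ℝ} (hA : A.IsHermitian) :
    (star hA.eigenvectorUnitary : Matrix (Fin d) (Fin d) ℝ) *
      (hA.eigenvectorUnitary : Matrix (Fin d) (Fin d) ℝ) = 1 :=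
  mul_eq_one_comm.mp (U_mul_star hA)

private lemma spectral_real {A : Matrix (Fin d) (Fin d) ℝ} (hA : A.IsHermitian) :
    A = (hA.eigenvectorUnitary : Matrix (Fin d) (Fin d) ℝ) * diagonal hA.eigenvalues *
      (star hA.eigenvectorUnitary : Matrix (Fin d) (Fin d) ℝ) := by
  simpa using hA.spectral_theorem

private lemma det_conj {A : Matrix (Fin d) (Fin d) ℝ} (hA : A.IsHermitian)
    (X : Matrix (Fin d) (Fin d) ℝ) :
    ((hA.eigenvectorUnitary : Matrix (Fin d) (Fin d) ℝ) * X *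
      (star hA.eigenvectorUnitary : Matrix (Fin d) (Fin d) ℝ)).det = X.det := by
  have h1 := congrArg Matrix.det (U_mul_star hA)
  rw [Matrix.det_mul, Matrix.det_one] at h1
  rw [Matrix.det_mul, Matrix.det_mul]
  linear_combination X.det * h1

private lemma trace_conj {A : Matrix (Fin d) (Fin d) ℝ} (hA : A.IsHermitian)
    (X : Matrix (Fin d) (Fin d) ℝ) :
    ((hA.eigenvectorUnitary : Matrix (Fin d) (Fin d) ℝ) * X *
      (star hA.eigenvectorUnitary : Matrix (Fin d) (Fin d) ℝ)).trace = X.trace := by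
  rw [Matrix.trace_mul_comm, ← Matrix.mul_assoc, star_mul_U hA, Matrix.one_mul]

private lemma sub_smul_one_psd {A : Matrix (Fin d) (Fin d) ℝ} (hA : A.IsHermitian) {c : ℝ}
    (hc : ∀ i, c ≤ hA.eigenvalues i) :
    (A - c • (1 : Matrix (Fin d) (Fin d) ℝ)).PosSemidef := by
  have key : A - c • (1 : Matrix (Fin d) (Fin d) ℝ) =
      (hA.eigenvectorUnitary : Matrix (Fin d) (Fin d) ℝ) *
        diagonal (fun i => hA.eigenvalues i - c) *
        (star hA.eigenvectorUnitary : Matrix (Fin d) (Fin d) ℝ) := by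
    have h1 : diagonal (fun i => hA.eigenvalues i - c) =
        diagonal hA.eigenvalues - c • (1 : Matrix (Fin d) (Fin d) ℝ) := by
      rw [← diag_const_eq, Matrix.diagonal_sub]
    rw [h1, Matrix.mul_sub, Matrix.sub_mul, ← spectral_real hA,
      Matrix.mul_smul, Matrix.smul_mul, Matrix.mul_one, U_mul_star hA]
  rw [key]
  have hd : (diagonal (fun i => hA.eigenvalues i - c)).PosSemidef :=
    Matrix.posSemidef_diagonal_iff.2 (fun i => sub_nonneg.2 (hc i))
  have h := hd.mul_mul_conjTranspose_same (hA.eigenvectorUnitary : Matrix (Fin d) (Fin d) ℝ)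
  simpa [Matrix.star_eq_conjTranspose] using h

private lemma eig_ge {W : Matrix (Fin d) (Fin d) ℝ} (hW : W.IsHermitian) {c : ℝ}
    (h : (W - c • (1 : Matrix (Fin d) (Fin d) ℝ)).PosSemidef) (i : Fin d) :
    c ≤ hW.eigenvalues i := by
  set v : Fin d → ℝ := (WithLp.equiv 2 _) (hW.eigenvectorBasis i) with hv
  have hWv : W *ᵥ v = hW.eigenvalues i • v := hW.mulVec_eigenvectorBasis i
  have hvne : v ≠ 0 := by
    have hbz := hW.eigenvectorBasis.toBasis.ne_zero i
    intro hc
    apply hbz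
    have : hW.eigenvectorBasis i = 0 := by
      apply (WithLp.equiv 2 _).injective
      simpa [hv] using hc
    simpa using this
  have hvv : 0 < v ⬝ᵥ v := by
    obtain ⟨j, hj⟩ := Function.ne_iff.mp hvne
    have hjj : (0:ℝ) < v j * v j := by
      rcases lt_or_gt_of_ne (show v j ≠ 0 by simpa using hj) with h' | h' <;> nlinarith
    exact Finset.sum_pos' (fun k _ => mul_self_nonneg _) ⟨j, Finset.mem_univ j, hjj⟩
  have h0 := h.re_dotProduct_nonneg v
  simp only [RCLike.star_def, star_trivial, RCLike.re_to_real] at h0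
  rw [Matrix.sub_mulVec, Matrix.smul_mulVec, Matrix.one_mulVec, hWv,
    dotProduct_sub, dotProduct_smul, dotProduct_smul] at h0
  simp only [smul_eq_mul] at h0
  nlinarith [h0, hvv]

private lemma right_inv_of_spectral {W U D D' Vm : Matrix (Fin d) (Fin d) ℝ}
    (hspec : W = U * D * Vm) (hVU : Vm * U = 1) (hDD' : D * D' = 1) (hUV : U * Vm = 1) :
    W * (U * D' * Vm) = 1 := by
  subst hspec
  have h1 : U * D * Vm * (U * D' * Vm) = U * (D * ((Vm * U) * (D' * Vm))) := by
    simp only [Matrix.mul_assoc]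
  rw [h1, hVU, Matrix.one_mul, ← Matrix.mul_assoc D D' Vm, hDD', Matrix.one_mul, hUV]

private lemma inv_dot_le {W : Matrix (Fin d) (Fin d) ℝ} (hW : W.PosDef) {c : ℝ} (hc : 0 < c)
    (h : ∀ i, c ≤ hW.isHermitian.eigenvalues i) (y : Fin d → ℝ) :
    y ⬝ᵥ W⁻¹ *ᵥ y ≤ c⁻¹ * (y ⬝ᵥ y) := by
  set hH := hW.isHermitian
  set U : Matrix (Fin d) (Fin d) ℝ := (hH.eigenvectorUnitary : Matrix (Fin d) (Fin d) ℝ) with hU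
  have hUs : U * (star hH.eigenvectorUnitary : Matrix (Fin d) (Fin d) ℝ) = 1 :=
    Matrix.mem_unitaryGroup_iff.mp hH.eigenvectorUnitary.2
  have hsU : (star hH.eigenvectorUnitary : Matrix (Fin d) (Fin d) ℝ) * U = 1 :=
    mul_eq_one_comm.mp hUs
  have hspec : W = U * diagonal hH.eigenvalues * (star hH.eigenvectorUnitary : Matrix (Fin d) (Fin d) ℝ) := by
    simpa using hH.spectral_theorem
  have hinv : W⁻¹ = U * diagonal (fun i => (hH.eigenvalues i)⁻¹) *
      (star hH.eigenvectorUnitary : Matrix (Fin d) (Fin d) ℝ) := by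
    apply Matrix.inv_eq_right_inv
    refine right_inv_of_spectral hspec hsU ?_ hUs
    rw [Matrix.diagonal_mul_diagonal]
    have : (fun i => hH.eigenvalues i * (hH.eigenvalues i)⁻¹) = fun _ : Fin d => (1:ℝ) := by
      funext i
      exact mul_inv_cancel₀ (by nlinarith [h i, hc])
    rw [this, Matrix.diagonal_one]
  have hpsd : (c⁻¹ • (1 : Matrix (Fin d) (Fin d) ℝ) - W⁻¹).PosSemidef := by
    have key : c⁻¹ • (1 : Matrix (Fin d) (Fin d) ℝ) - W⁻¹ =
        U * diagonal (fun i => c⁻¹ - (hH.eigenvalues i)⁻¹) *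
          (star hH.eigenvectorUnitary : Matrix (Fin d) (Fin d) ℝ) := by
      have hd : diagonal (fun i => c⁻¹ - (hH.eigenvalues i)⁻¹) =
          c⁻¹ • (1 : Matrix (Fin d) (Fin d) ℝ) - diagonal (fun i => (hH.eigenvalues i)⁻¹) := by
        rw [← diag_const_eq, Matrix.diagonal_sub]
      rw [hd, Matrix.mul_sub, Matrix.sub_mul, ← hinv,
        Matrix.mul_smul, Matrix.smul_mul, Matrix.mul_one, hUs]
    rw [key]
    have hd : (diagonal (fun i => c⁻¹ - (hH.eigenvalues i)⁻¹)).PosSemidef := by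
      refine Matrix.posSemidef_diagonal_iff.2 (fun i => ?_)
      have h1 : 0 < hH.eigenvalues i := lt_of_lt_of_le hc (h i)
      have := inv_anti₀ hc (h i)
      linarith
    have h2 := hd.mul_mul_conjTranspose_same U
    simpa [Matrix.star_eq_conjTranspose] using h2
  have h0 := hpsd.re_dotProduct_nonneg y
  simp only [RCLike.star_def, star_trivial, RCLike.re_to_real] at h0
  rw [Matrix.sub_mulVec, Matrix.smul_mulVec, Matrix.one_mulVec,
    dotProduct_sub, dotProduct_smul] at h0
  simp only [smul_eq_mul] at h0
  linarith

private lemma one_add_sum_le_prod' {α : Type*} (s : Finset α) (f : α → ℝ)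
    (hf : ∀ i ∈ s, 0 ≤ f i) :
    1 + ∑ i ∈ s, f i ≤ ∏ i ∈ s, (1 + f i) := by
  classical
  induction s using Finset.induction_on with
  | empty => simp
  | @insert a s ha ih =>
    rw [Finset.sum_insert ha, Finset.prod_insert ha]
    have h1 := ih (fun i hi => hf i (Finset.mem_insert_of_mem hi))
    have h2 : 0 ≤ ∑ i ∈ s, f i := Finset.sum_nonneg (fun i hi => hf i (Finset.mem_insert_of_mem hi))
    have h3 : 0 ≤ f a := hf a (Finset.mem_insert_self a s)
    nlinarith [mul_le_mul_of_nonneg_left h1 (by linarith : (0:ℝ) ≤ 1 + f a)]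

private lemma det_one_add_psd {M : Matrix (Fin d) (Fin d) ℝ} (hM : M.PosSemidef) :
    1 + M.trace ≤ (1 + M).det := by
  have hH := hM.1
  have key : (1 : Matrix (Fin d) (Fin d) ℝ) + M =
      (hH.eigenvectorUnitary : Matrix (Fin d) (Fin d) ℝ) *
        diagonal (fun i => 1 + hH.eigenvalues i) *
        (star hH.eigenvectorUnitary : Matrix (Fin d) (Fin d) ℝ) := by
    have hd : diagonal (fun i => 1 + hH.eigenvalues i) =
        1 + diagonal hH.eigenvalues := by
      rw [← Matrix.diagonal_one, ← Matrix.diagonal_add]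
    rw [hd, Matrix.mul_add, Matrix.mul_one, Matrix.add_mul, ← spectral_real hH, U_mul_star hH]
  have hdet : ((1 : Matrix (Fin d) (Fin d) ℝ) + M).det = ∏ i, (1 + hH.eigenvalues i) := by
    rw [key, det_conj hH, Matrix.det_diagonal]
  have htr : M.trace = ∑ i, hH.eigenvalues i := by
    conv_lhs => rw [spectral_real hH]
    rw [trace_conj hH, Matrix.trace_diagonal]
  rw [hdet, htr]
  exact one_add_sum_le_prod' _ _ (fun i _ => hM.eigenvalues_nonneg i)

private lemma det_add_ge {W A : Matrix (Fin d) (Fin d) ℝ} (hW : W.PosDef) (hA : A.PosSemidef) :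
    W.det * (1 + (W⁻¹ * A).trace) ≤ (W + A).det := by
  obtain ⟨S, hSpsd, hSS⟩ : ∃ S : Matrix (Fin d) (Fin d) ℝ, S.PosSemidef ∧ S * S = W :=
    open scoped MatrixOrder in ⟨CFC.sqrt W, Matrix.nonneg_iff_posSemidef.mp (CFC.sqrt_nonneg W),
      CFC.sqrt_mul_sqrt_self W (Matrix.nonneg_iff_posSemidef.mpr hW.posSemidef)⟩
  have hdetW : 0 < W.det := hW.det_pos
  have hss : S.det * S.det = W.det := by rw [← Matrix.det_mul, hSS]
  have hdetS : S.det ≠ 0 := by intro h0; rw [h0] at hss; simp at hss; linarith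
  have hSi : S * S⁻¹ = 1 := Matrix.mul_nonsing_inv S (isUnit_iff_ne_zero.2 hdetS)
  have hiS : S⁻¹ * S = 1 := Matrix.nonsing_inv_mul S (isUnit_iff_ne_zero.2 hdetS)
  set M := S⁻¹ * A * S⁻¹ with hMdef
  have hMpsd : M.PosSemidef := by
    have hh : (S⁻¹)ᴴ = S⁻¹ := by rw [Matrix.conjTranspose_nonsing_inv, hSpsd.1]
    have := hA.mul_mul_conjTranspose_same S⁻¹
    rwa [hh] at this
  have key : S * (1 + M) * S = W + A := by
    have hra : S * M * S = A :=
      calc S * M * S = (S * S⁻¹) * A * (S⁻¹ * S) := by rw [hMdef]; simp only [Matrix.mul_assoc]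
        _ = A := by rw [hSi, hiS, Matrix.one_mul, Matrix.mul_one]
    rw [Matrix.mul_add, Matrix.mul_one, Matrix.add_mul, hSS, hra]
  have hdet : (W + A).det = W.det * (1 + M).det := by
    rw [← key, Matrix.det_mul, Matrix.det_mul]
    rw [show S.det * (1 + M).det * S.det = S.det * S.det * (1 + M).det from by ring, hss]
  have htr : M.trace = (W⁻¹ * A).trace := by
    have h1 : W⁻¹ = S⁻¹ * S⁻¹ := by rw [← hSS, Matrix.mul_inv_rev]
    rw [hMdef, Matrix.trace_mul_comm (S⁻¹ * A) (S⁻¹), ← Matrix.mul_assoc, ← h1]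
  have hfinal := det_one_add_psd hMpsd
  rw [hdet, ← htr]
  exact mul_le_mul_of_nonneg_left hfinal (le_of_lt hdetW)

private lemma trace_mul_vecMulVec (M : Matrix (Fin d) (Fin d) ℝ) (w : Fin d → ℝ) :
    (M * vecMulVec w w).trace = w ⬝ᵥ M *ᵥ w := by
  simp only [Matrix.trace, Matrix.diag, Matrix.mul_apply, vecMulVec_apply, dotProduct,
    mulVec, Finset.mul_sum]
  exact Finset.sum_congr rfl fun i _ => Finset.sum_congr rfl fun j _ => by ring

private lemma half_le_log_one_add {u : ℝ} (h0 : 0 ≤ u) (h1 : u ≤ 1) :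
    u / 2 ≤ Real.log (1 + u) := by
  have hp : 0 < 1 + u := by linarith
  have hlog := Real.one_sub_inv_le_log_of_pos hp
  have hh : (1 + u)⁻¹ * (1 + u) = 1 := inv_mul_cancel₀ hp.ne'
  have hipos : 0 < (1 + u)⁻¹ := inv_pos.2 hp
  nlinarith [hlog, hh, hipos, h0, h1]

end AuxLemmas

/-- The minimum eigenvalue of a Hermitian real matrix. -/
noncomputable def lambdaMin {d : ℕ} (A : Matrix (Fin d) (Fin d) ℝ)
    (hA : A.IsHermitian) : ℝ :=
  ⨅ i, hA.eigenvalues i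

/-- Batched elliptical potential bound:
`∑_{t'=T₀+1}^T ∑_{i∈S_{t'}} ‖x_{t',i}‖²_{V_{t'-1}⁻¹} ≤ 2 log(det(V_T)/λ_min(V_{T₀})^d)`. -/
theorem stmt5 {d K T₀ T : ℕ} {ι : Type*}
    (V₀ : Matrix (Fin d) (Fin d) ℝ) (hV₀ : V₀.PosDef)
    (hmin : (K : ℝ) ≤ lambdaMin V₀ hV₀.isHermitian)
    (S : ℕ → Finset ι) (x : ℕ → ι → Fin d → ℝ)
    (hcard : ∀ t ∈ Finset.Ioc T₀ T, (S t).card ≤ K)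
    (hx : ∀ t ∈ Finset.Ioc T₀ T, ∀ i ∈ S t, Real.sqrt (∑ j, (x t i j) ^ 2) ≤ 1)
    (V : ℕ → Matrix (Fin d) (Fin d) ℝ)
    (hV : ∀ t, V t = V₀ + ∑ t' ∈ Finset.Ioc T₀ t, ∑ i ∈ S t', vecMulVec (x t' i) (x t' i)) :
    ∑ t' ∈ Finset.Ioc T₀ T, ∑ i ∈ S t', x t' i ⬝ᵥ (V (t' - 1))⁻¹ *ᵥ x t' i
      ≤ 2 * Real.log ((V T).det / (lambdaMin V₀ hV₀.isHermitian) ^ d) := by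
  classical
  rcases Nat.eq_zero_or_pos d with hd | hd
  · subst hd
    simp [Matrix.det_isEmpty, dotProduct]
  haveI hne : Nonempty (Fin d) := ⟨⟨0, hd⟩⟩
  set lam := lambdaMin V₀ hV₀.isHermitian with hlamdef
  have hbdd : BddBelow (Set.range hV₀.isHermitian.eigenvalues) :=
    (Set.finite_range _).bddBelow
  have hlam_le : ∀ i, lam ≤ hV₀.isHermitian.eigenvalues i := fun i => ciInf_le hbdd i
  have hlam_pos : 0 < lam := by
    obtain ⟨i₀, hi₀⟩ := Finite.exists_min hV₀.isHermitian.eigenvalues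
    exact lt_of_lt_of_le (hV₀.eigenvalues_pos i₀) (le_ciInf hi₀)
  have hterm : ∀ t', (∑ i ∈ S t', vecMulVec (x t' i) (x t' i)).PosSemidef := fun t' =>
    Finset.sum_induction _ _ (fun a b ha hb => ha.add hb) Matrix.PosSemidef.zero
      (fun i _ => psd_vecMulVec _)
  have hpsdsum : ∀ N,
      (∑ t' ∈ Finset.Ioc T₀ N, ∑ i ∈ S t', vecMulVec (x t' i) (x t' i)).PosSemidef :=
    fun N => Finset.sum_induction _ _ (fun a b ha hb => ha.add hb) Matrix.PosSemidef.zero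
      (fun t' _ => hterm t')
  have hVpos : ∀ N, (V N).PosDef := fun N => by
    rw [hV N]; exact hV₀.add_posSemidef (hpsdsum N)
  have hVeig : ∀ N i, (K:ℝ) ≤ (hVpos N).isHermitian.eigenvalues i := by
    intro N i
    refine eig_ge _ ?_ i
    have h1 : V N - (K:ℝ) • (1 : Matrix (Fin d) (Fin d) ℝ) =
        (V₀ - (K:ℝ) • 1) + ∑ t' ∈ Finset.Ioc T₀ N, ∑ i ∈ S t', vecMulVec (x t' i) (x t' i) := by
      rw [hV N]; abel
    rw [h1]
    exact (sub_smul_one_psd hV₀.isHermitian (fun j => le_trans hmin (hlam_le j))).add (hpsdsum N)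
  have hstep : ∀ t ∈ Finset.Ioc T₀ T,
      ∑ i ∈ S t, x t i ⬝ᵥ (V (t - 1))⁻¹ *ᵥ x t i
        ≤ 2 * (Real.log (V t).det - Real.log (V (t - 1)).det) := by
    intro t ht
    obtain ⟨ht1, ht2⟩ := Finset.mem_Ioc.mp ht
    have hts : T₀ ≤ t - 1 := by omega
    have htsucc : t - 1 + 1 = t := by omega
    have hVt : V t = V (t - 1) + ∑ i ∈ S t, vecMulVec (x t i) (x t i) := by
      have hsum := Finset.sum_Ioc_succ_top hts
        (fun t' => ∑ i ∈ S t', vecMulVec (x t' i) (x t' i))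
      rw [htsucc] at hsum
      rw [hV t, hV (t - 1), hsum, add_assoc]
    set W := V (t - 1) with hWdef
    have hWpos : W.PosDef := hVpos (t - 1)
    set u : ℝ := ∑ i ∈ S t, x t i ⬝ᵥ W⁻¹ *ᵥ x t i with hudef
    have hu0 : 0 ≤ u := Finset.sum_nonneg fun i _ => dotnn hWpos.inv.posSemidef _
    have hu1 : u ≤ 1 := by
      rcases Finset.eq_empty_or_nonempty (S t) with hS | hS
      · simp [hudef, hS]
      · have hK1 : 1 ≤ K := by
          have := Finset.card_pos.2 hS
          have := hcard t ht
          omega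
        have hKpos : (0:ℝ) < K := by exact_mod_cast hK1
        have hterm_le : ∀ i ∈ S t, x t i ⬝ᵥ W⁻¹ *ᵥ x t i ≤ (K:ℝ)⁻¹ := by
          intro i hi
          have h1 := inv_dot_le hWpos hKpos (hVeig (t - 1)) (x t i)
          have hxx : x t i ⬝ᵥ x t i ≤ 1 := by
            have hs := hx t ht i hi
            have hnn : 0 ≤ ∑ j, (x t i j) ^ 2 := Finset.sum_nonneg fun j _ => sq_nonneg _
            have hsq := Real.sq_sqrt hnn
            have h2 : ∑ j, (x t i j) ^ 2 ≤ 1 := by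
              nlinarith [Real.sqrt_nonneg (∑ j, (x t i j) ^ 2)]
            calc x t i ⬝ᵥ x t i = ∑ j, (x t i j) ^ 2 := by simp [dotProduct, sq]
              _ ≤ 1 := h2
          calc x t i ⬝ᵥ W⁻¹ *ᵥ x t i ≤ (K:ℝ)⁻¹ * (x t i ⬝ᵥ x t i) := h1
            _ ≤ (K:ℝ)⁻¹ * 1 := mul_le_mul_of_nonneg_left hxx (le_of_lt (inv_pos.2 hKpos))
            _ = (K:ℝ)⁻¹ := mul_one _
        calc u ≤ ∑ _i ∈ S t, (K:ℝ)⁻¹ := Finset.sum_le_sum hterm_le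
          _ = (S t).card * (K:ℝ)⁻¹ := by rw [Finset.sum_const, nsmul_eq_mul]
          _ ≤ K * (K:ℝ)⁻¹ := by
              refine mul_le_mul_of_nonneg_right ?_ (le_of_lt (inv_pos.2 hKpos))
              exact_mod_cast hcard t ht
          _ = 1 := mul_inv_cancel₀ (ne_of_gt hKpos)
    have htrace : (W⁻¹ * ∑ i ∈ S t, vecMulVec (x t i) (x t i)).trace = u := by
      rw [Matrix.mul_sum, Matrix.trace_sum]
      exact Finset.sum_congr rfl fun i _ => trace_mul_vecMulVec _ _
    have hdet : W.det * (1 + u) ≤ (V t).det := by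
      rw [hVt]
      have hh := det_add_ge hWpos (hterm t)
      rwa [htrace] at hh
    have hWdetpos : 0 < W.det := hWpos.det_pos
    have hVtdetpos : 0 < (V t).det := (hVpos t).det_pos
    have hlog1 : Real.log (W.det * (1 + u)) ≤ Real.log (V t).det :=
      Real.log_le_log (mul_pos hWdetpos (by linarith)) hdet
    have hlogmul : Real.log (W.det * (1 + u)) = Real.log W.det + Real.log (1 + u) :=
      Real.log_mul (ne_of_gt hWdetpos) (by linarith)
    have hhalf := half_le_log_one_add hu0 hu1
    linarith [hlog1, hlogmul, hhalf]
  have htel : ∀ N, N ≤ T →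
      ∑ t' ∈ Finset.Ioc T₀ N, (∑ i ∈ S t', x t' i ⬝ᵥ (V (t' - 1))⁻¹ *ᵥ x t' i)
        ≤ 2 * (Real.log (V N).det - Real.log (V T₀).det) := by
    intro N
    induction N with
    | zero =>
      intro _
      have h0 : Finset.Ioc T₀ 0 = ∅ := Finset.Ioc_eq_empty (by omega)
      have hV0 : V 0 = V T₀ := by rw [hV 0, hV T₀, h0, Finset.Ioc_self]
      rw [h0, hV0]
      simp
    | succ N ih =>
      intro hNT
      rcases le_or_gt (N + 1) T₀ with hle | hgt
      · have h0 : Finset.Ioc T₀ (N + 1) = ∅ := Finset.Ioc_eq_empty (by omega)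
        have hVN : V (N + 1) = V T₀ := by rw [hV (N + 1), hV T₀, h0, Finset.Ioc_self]
        rw [h0, hVN]
        simp
      · have hTN : T₀ ≤ N := by omega
        rw [Finset.sum_Ioc_succ_top hTN]
        have hmem : N + 1 ∈ Finset.Ioc T₀ T := Finset.mem_Ioc.mpr ⟨by omega, hNT⟩
        have hs := hstep (N + 1) hmem
        have hN1 : N + 1 - 1 = N := by omega
        rw [hN1] at hs ⊢
        have hih := ih (by omega)
        linarith
  have hmain := htel T le_rfl
  have hVT0 : V T₀ = V₀ := by rw [hV T₀, Finset.Ioc_self]; simp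
  have hdetV0 : lam ^ d ≤ (V T₀).det := by
    rw [hVT0]
    have hprod : V₀.det = ∏ i, hV₀.isHermitian.eigenvalues i := by
      simpa using hV₀.isHermitian.det_eq_prod_eigenvalues
    rw [hprod]
    calc lam ^ d = ∏ _i : Fin d, lam := by
          rw [Finset.prod_const, Finset.card_univ, Fintype.card_fin]
      _ ≤ ∏ i, hV₀.isHermitian.eigenvalues i :=
          Finset.prod_le_prod (fun _ _ => le_of_lt hlam_pos) (fun i _ => hlam_le i)
  have hlamd_pos : 0 < lam ^ d := pow_pos hlam_pos d
  have hVTdet : 0 < (V T).det := (hVpos T).det_pos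
  have hlogdiv : Real.log ((V T).det / lam ^ d) = Real.log (V T).det - Real.log (lam ^ d) :=
    Real.log_div (ne_of_gt hVTdet) (ne_of_gt hlamd_pos)
  have hloglam : Real.log (lam ^ d) ≤ Real.log (V T₀).det :=
    Real.log_le_log hlamd_pos hdetV0
  rw [hlogdiv]
  linarith [hmain, hloglam]
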